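/- For a finitely supported multi-index ν with |ν| ≥ 1, the sum over all multi-indices η with 0 < η ≤ ν of C(ν,η)·[1/2]_{|η|}·[1/2]_{|ν-η|} is at most 3·[1/2]_{|ν|}. -/

import Mathlib

open Polynomial Finset

/-- `ffHalf n = |(1/2)_n|`, the absolute value of the falling factorial of `1/2`. -/
noncomputable def ffHalf (n : ℕ) : ℝ := |(descPochhammer ℝ n).eval (1/2 : ℝ)|

/-- degree `|ν|` of a multi-index: the sum of its entries. -/
def mdeg (ν : ℕ →₀ ℕ) : ℕ := ν.sum fun _ k => k

/-- multi-index binomial coefficient `C(ν,η) = ∏_j C(ν_j, η_j)`. -/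
def mchoose (ν η : ℕ →₀ ℕ) : ℕ := ∏ j ∈ ν.support, (ν j).choose (η j)


noncomputable def dP (k : ℕ) : ℝ := (descPochhammer ℝ k).eval (1/2 : ℝ)

lemma ffHalf_eq (k : ℕ) : ffHalf k = |dP k| := rfl

lemma dP_zero : dP 0 = 1 := by simp [dP]

lemma dP_succ (k : ℕ) : dP (k+1) = dP k * (1/2 - k) := by
  rw [dP, dP, descPochhammer_succ_right, eval_mul, eval_sub, eval_X, eval_natCast]

lemma ffHalf_zero : ffHalf 0 = 1 := by simp [ffHalf_eq, dP_zero]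

lemma ffHalf_succ (k : ℕ) : ffHalf (k+1) = ffHalf k * |1/2 - (k:ℝ)| := by
  rw [ffHalf_eq, ffHalf_eq, dP_succ, abs_mul]

lemma half_sub_ne (k : ℕ) : (1/2 - (k:ℝ)) ≠ 0 := by
  intro h
  have : (k:ℝ) = 1/2 := by linarith [sub_eq_zero.mp h]
  rcases k with _ | k
  · norm_num at this
  · have h1 : (1:ℝ) ≤ (k:ℝ) + 1 := by linarith [Nat.cast_nonneg (α := ℝ) k]
    push_cast at this; linarith

lemma ffHalf_pos (k : ℕ) : 0 < ffHalf k := by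
  induction k with
  | zero => simp [ffHalf_zero]
  | succ k ih =>
    rw [ffHalf_succ]
    exact mul_pos ih (abs_pos.mpr (half_sub_ne k))

lemma dP_sign (k : ℕ) : dP (k+1) = (-1)^k * ffHalf (k+1) := by
  induction k with
  | zero => simp [dP_succ, dP_zero, ffHalf_succ, ffHalf_zero]
  | succ k ih =>
    have habs : |1/2 - ((k:ℝ)+1)| = ((k:ℝ)+1) - 1/2 := by
      rw [abs_sub_comm, abs_of_pos]; push_cast; linarith [Nat.cast_nonneg (α := ℝ) k]
    rw [dP_succ, ih, ffHalf_succ (k+1)]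
    push_cast
    rw [habs]
    ring

lemma vandermonde_dP (n : ℕ) :
    (descPochhammer ℝ n).eval 1 =
      ∑ ij ∈ Finset.HasAntidiagonal.antidiagonal n, (Nat.choose n ij.1 : ℝ) * (dP ij.1 * dP ij.2) := by
  have h := Ring.descPochhammer_smeval_add (R := ℝ) (r := (1/2:ℝ)) (s := (1/2:ℝ)) n (Commute.all _ _)
  have hs : ∀ (k : ℕ) (x : ℝ), (descPochhammer ℤ k).smeval x = (descPochhammer ℝ k).eval x := by
    intro k x
    rw [← aeval_eq_smeval, aeval_def, ← eval_map, descPochhammer_map]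
  rw [hs] at h
  norm_num at h
  rw [h]
  refine Finset.sum_congr rfl fun ij _ => ?_
  rw [hs, hs]
  rfl

lemma eval_one_eq_zero (m : ℕ) : (descPochhammer ℝ (m+2)).eval 1 = 0 := by
  rw [descPochhammer_succ_left, eval_mul, eval_X, eval_comp, eval_sub, eval_X, eval_one]
  norm_num [descPochhammer_eval_zero]

lemma middle_sum (m : ℕ) :
    ∑ k ∈ range (m+1), (Nat.choose (m+2) (k+1) : ℝ) * ffHalf (k+1) * ffHalf (m+1-k)
      = 2 * ffHalf (m+2) := by
  have h := vandermonde_dP (m+2)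
  rw [eval_one_eq_zero, Finset.Nat.sum_antidiagonal_eq_sum_range_succ_mk] at h
  rw [Finset.sum_range_succ', Finset.sum_range_succ] at h
  simp only [Nat.choose_self, Nat.choose_zero_right, Nat.cast_one, one_mul, Nat.sub_self,
    Nat.sub_zero, dP_zero, mul_one] at h
  have hmid : ∀ k ∈ range (m+1),
      (Nat.choose (m+2) (k+1) : ℝ) * (dP (k+1) * dP (m+2-(k+1)))
        = (-1)^m * ((Nat.choose (m+2) (k+1) : ℝ) * ffHalf (k+1) * ffHalf (m+1-k)) := by
    intro k hk
    have hk' : k ≤ m := by simpa using Nat.lt_succ_iff.mp (Finset.mem_range.mp hk)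
    have h1 : m + 2 - (k+1) = (m-k) + 1 := by omega
    have h2 : m + 1 - k = (m-k) + 1 := by omega
    rw [h1, h2, dP_sign, dP_sign]
    have : (-1:ℝ)^k * (-1:ℝ)^(m-k) = (-1)^m := by
      rw [← pow_add]; congr 1; omega
    calc (Nat.choose (m+2) (k+1) : ℝ) * ((-1)^k * ffHalf (k+1) * ((-1)^(m-k) * ffHalf (m-k+1)))
        = ((-1:ℝ)^k * (-1:ℝ)^(m-k)) * ((Nat.choose (m+2) (k+1) : ℝ) * ffHalf (k+1) * ffHalf (m-k+1)) := by ring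
      _ = _ := by rw [this]
  rw [Finset.sum_congr rfl hmid, ← Finset.mul_sum] at h
  have hdn : dP (m+2) = (-1)^(m+1) * ffHalf (m+2) := dP_sign (m+1)
  rw [hdn] at h
  have hpow : ((-1:ℝ)^m) ≠ 0 := by positivity
  have hm1 : (-1:ℝ)^(m+1) = -((-1:ℝ)^m) := by rw [pow_succ]; ring
  rw [hm1] at h
  set S := ∑ k ∈ range (m+1), (Nat.choose (m+2) (k+1) : ℝ) * ffHalf (k+1) * ffHalf (m+1-k) with hS
  have h2 : (-1:ℝ)^m * (S - 2 * ffHalf (m+2)) = 0 := by linarith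
  have h3 := (mul_eq_zero.mp h2).resolve_left hpow
  linarith



lemma mdeg_add (x y : ℕ →₀ ℕ) : mdeg (x + y) = mdeg x + mdeg y := by
  simp [mdeg, Finsupp.sum_add_index']

lemma mdeg_single (a n : ℕ) : mdeg (Finsupp.single a n) = n := by
  simp [mdeg, Finsupp.sum_single_index]

lemma mdeg_zero : mdeg 0 = 0 := by simp [mdeg]

lemma mchoose_zero_right (ν : ℕ →₀ ℕ) : mchoose ν 0 = 1 := by
  simp [mchoose]

lemma sum_Icc_single_add {M : Type*} [AddCommMonoid M] (a n : ℕ) (f : ℕ →₀ ℕ) (ha : f a = 0)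
    (g : (ℕ →₀ ℕ) → M) :
    ∑ η ∈ Finset.Icc 0 (Finsupp.single a n + f), g η
      = ∑ i ∈ Finset.range (n+1), ∑ τ ∈ Finset.Icc 0 f, g (Finsupp.single a i + τ) := by
  rw [← Finset.sum_product']
  refine Finset.sum_bij' (fun η _ => (η a, η.erase a))
    (fun p _ => Finsupp.single a p.1 + p.2) ?_ ?_ ?_ ?_ ?_
  · intro η hη
    rw [Finset.mem_Icc] at hη
    have hle := hη.2
    rw [Finset.mem_product, Finset.mem_range, Finset.mem_Icc]
    constructor
    · have := hle a
      simpa [ha] using Nat.lt_succ_of_le this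
    · refine ⟨zero_le, ?_⟩
      intro b
      by_cases hb : b = a
      · subst hb; simp [ha]
      · have hab : a ≠ b := Ne.symm hb
        have := hle b
        simpa [Finsupp.single_apply, hab, Finsupp.erase_ne hb] using this
  · intro p hp
    rw [Finset.mem_product, Finset.mem_range, Finset.mem_Icc] at hp
    rw [Finset.mem_Icc]
    refine ⟨zero_le, ?_⟩
    intro b
    by_cases hb : b = a
    · subst hb
      have hτa : p.2 b = 0 := Nat.le_zero.mp (ha ▸ hp.2.2 b)
      simp [Finsupp.single_apply, hτa, ha, Nat.lt_succ_iff.mp hp.1]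
    · have hab : a ≠ b := Ne.symm hb
      simpa [Finsupp.single_apply, hab] using hp.2.2 b
  · intro η hη
    simp [Finsupp.single_add_erase]
  · intro p hp
    rw [Finset.mem_product, Finset.mem_range, Finset.mem_Icc] at hp
    have hτa : p.2 a = 0 := Nat.le_zero.mp (ha ▸ hp.2.2 a)
    have h1 : (Finsupp.single a p.1 + p.2) a = p.1 := by simp [hτa]
    have h2 : (Finsupp.single a p.1 + p.2).erase a = p.2 := by
      rw [Finsupp.erase_add, Finsupp.erase_single, zero_add]
      ext b
      by_cases hb : b = a
      · subst hb; simp [hτa]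
      · simp [Finsupp.erase_ne hb]
    simp [h1, h2]
  · intro η hη
    rw [Finsupp.single_add_erase]


lemma mchoose_split (a n : ℕ) (f : ℕ →₀ ℕ) (ha : a ∉ f.support) (hn : n ≠ 0)
    (i : ℕ) (τ : ℕ →₀ ℕ) (hτ : τ a = 0) :
    mchoose (Finsupp.single a n + f) (Finsupp.single a i + τ) = n.choose i * mchoose f τ := by
  have hfa : f a = 0 := Finsupp.notMem_support_iff.mp ha
  have hsupp : (Finsupp.single a n + f).support = insert a f.support := by
    rw [Finsupp.support_add_eq, Finsupp.support_single_ne_zero a hn]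
    · ext b; simp
    · rw [Finsupp.support_single_ne_zero a hn]
      simpa using ha
  rw [mchoose, hsupp, Finset.prod_insert ha]
  congr 1
  · simp [hfa, hτ]
  · refine Finset.prod_congr rfl fun b hb => ?_
    have hab : a ≠ b := fun h => ha (h ▸ hb)
    simp [Finsupp.single_apply, hab]

lemma nat_vander (n m k : ℕ) :
    ∑ i ∈ range (n+1), (if i ≤ k then n.choose i * m.choose (k-i) else 0)
      = (n+m).choose k := by
  rw [Nat.add_choose_eq, Finset.Nat.sum_antidiagonal_eq_sum_range_succ_mk]
  have h1 := Finset.sum_subset (f := fun i => if i ≤ k then n.choose i * m.choose (k-i) else 0)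
      (s₁ := range (n+1)) (s₂ := range (n+k+1)) (by intro x hx; rw [Finset.mem_range] at *; omega)
      (by intro x hx hnx
          rw [Finset.mem_range] at hnx
          have h : n < x := by omega
          split
          · rw [Nat.choose_eq_zero_of_lt h, zero_mul]
          · rfl)
  have h2 := Finset.sum_subset (f := fun i => if i ≤ k then n.choose i * m.choose (k-i) else 0)
      (s₁ := range (k+1)) (s₂ := range (n+k+1)) (by intro x hx; rw [Finset.mem_range] at *; omega)
      (by intro x hx hnx
          rw [Finset.mem_range, Nat.lt_succ_iff] at hnx
          rw [if_neg hnx])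
  rw [h1, ← h2]
  refine Finset.sum_congr rfl fun x hx => ?_
  rw [Finset.mem_range, Nat.lt_succ_iff] at hx
  simp [if_pos hx]

lemma count_eq (ν : ℕ →₀ ℕ) : ∀ k, ∑ η ∈ Finset.Icc 0 ν,
    (if mdeg η = k then mchoose ν η else 0) = (mdeg ν).choose k := by
  induction ν using Finsupp.induction with
  | zero =>
    intro k
    rw [Finset.Icc_self, Finset.sum_singleton, mdeg_zero, mchoose_zero_right]
    cases k <;> simp
  | single_add a n f haf hn ih =>
    intro k
    have hfa : f a = 0 := Finsupp.notMem_support_iff.mp haf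
    rw [sum_Icc_single_add a n f hfa]
    have hstep : ∀ i ∈ range (n+1),
        ∑ τ ∈ Finset.Icc 0 f, (if mdeg (Finsupp.single a i + τ) = k
            then mchoose (Finsupp.single a n + f) (Finsupp.single a i + τ) else 0)
        = if i ≤ k then n.choose i * (mdeg f).choose (k-i) else 0 := by
      intro i _
      have hterm : ∀ τ ∈ Finset.Icc 0 f,
          (if mdeg (Finsupp.single a i + τ) = k
            then mchoose (Finsupp.single a n + f) (Finsupp.single a i + τ) else 0)
          = if i + mdeg τ = k then n.choose i * mchoose f τ else 0 := by
        intro τ hτ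
        have hτa : τ a = 0 := by
          rw [Finset.mem_Icc] at hτ
          exact Nat.le_zero.mp (hfa ▸ hτ.2 a)
        rw [mchoose_split a n f haf hn i τ hτa, mdeg_add, mdeg_single]
      rw [Finset.sum_congr rfl hterm]
      by_cases hik : i ≤ k
      · rw [if_pos hik, ← ih (k-i), Finset.mul_sum]
        refine Finset.sum_congr rfl fun τ _ => ?_
        have hiff : (i + mdeg τ = k) ↔ (mdeg τ = k - i) := by omega
        by_cases h : mdeg τ = k - i
        · rw [if_pos (hiff.mpr h), if_pos h]
        · rw [if_neg (fun hc => h (hiff.mp hc)), if_neg h, mul_zero]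
      · rw [if_neg hik]
        refine Finset.sum_eq_zero fun τ _ => ?_
        rw [if_neg (by omega)]
    rw [Finset.sum_congr rfl hstep, mdeg_add, mdeg_single, nat_vander]

lemma range_sum_le (n : ℕ) (hn : 1 ≤ n) :
    ∑ k ∈ range (n+1), (n.choose k : ℝ) * ffHalf k * ffHalf (n-k) ≤ 4 * ffHalf n := by
  match n, hn with
  | 1, _ =>
    simp [Finset.sum_range_succ, ffHalf_zero]
    linarith [ffHalf_pos 1]
  | (m+2), _ =>
    rw [Finset.sum_range_succ', Finset.sum_range_succ]
    have hmid : ∀ k ∈ range (m+1),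
        ((m+2).choose (k+1) : ℝ) * ffHalf (k+1) * ffHalf (m+2-(k+1))
          = ((m+2).choose (k+1) : ℝ) * ffHalf (k+1) * ffHalf (m+1-k) := by
      intro k hk
      congr 2
      omega
    rw [Finset.sum_congr rfl hmid, middle_sum]
    simp [ffHalf_zero]
    linarith [ffHalf_pos (m+2)]

lemma mdeg_mono {η ν : ℕ →₀ ℕ} (h : η ≤ ν) : mdeg η ≤ mdeg ν := by
  have := mdeg_add η (ν - η)
  rw [add_tsub_cancel_of_le h] at this
  omega

lemma mdeg_sub {η ν : ℕ →₀ ℕ} (h : η ≤ ν) : mdeg (ν - η) = mdeg ν - mdeg η := by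
  have := mdeg_add η (ν - η)
  rw [add_tsub_cancel_of_le h] at this
  omega

theorem ffHalf_multiindex_sum_le (ν : ℕ →₀ ℕ) (hν : 1 ≤ mdeg ν) :
    ∑ η ∈ Finset.Ioc 0 ν,
        (mchoose ν η : ℝ) * ffHalf (mdeg η) * ffHalf (mdeg (ν - η))
      ≤ 3 * ffHalf (mdeg ν) := by
  set n := mdeg ν with hn
  have h0ν : (0 : ℕ →₀ ℕ) ≤ ν := zero_le
  have hicc : ∑ η ∈ Finset.Icc 0 ν, (mchoose ν η : ℝ) * ffHalf (mdeg η) * ffHalf (mdeg (ν - η))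
      = ffHalf n + ∑ η ∈ Finset.Ioc 0 ν,
          (mchoose ν η : ℝ) * ffHalf (mdeg η) * ffHalf (mdeg (ν - η)) := by
    rw [Finset.Icc_eq_cons_Ioc h0ν, Finset.sum_cons]
    congr 1
    rw [mdeg_zero, mchoose_zero_right, ffHalf_zero, tsub_zero]
    norm_num
    rfl
  have hfib : ∑ η ∈ Finset.Icc 0 ν, (mchoose ν η : ℝ) * ffHalf (mdeg η) * ffHalf (mdeg (ν - η))
      = ∑ k ∈ range (n+1), (n.choose k : ℝ) * ffHalf k * ffHalf (n-k) := by
    rw [← Finset.sum_fiberwise_of_maps_to (g := mdeg) (t := range (n+1))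
      (fun η hη => by
        rw [Finset.mem_Icc] at hη
        rw [Finset.mem_range, Nat.lt_succ_iff]
        exact mdeg_mono hη.2)]
    refine Finset.sum_congr rfl fun k hk => ?_
    have hterm : ∀ η ∈ (Finset.Icc 0 ν).filter (fun η => mdeg η = k),
        (mchoose ν η : ℝ) * ffHalf (mdeg η) * ffHalf (mdeg (ν - η))
          = (mchoose ν η : ℝ) * (ffHalf k * ffHalf (n-k)) := by
      intro η hη
      rw [Finset.mem_filter, Finset.mem_Icc] at hη
      rw [hη.2, mdeg_sub hη.1.2, hη.2, mul_assoc]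
    rw [Finset.sum_congr rfl hterm, ← Finset.sum_mul]
    have hcount : ∑ η ∈ (Finset.Icc 0 ν).filter (fun η => mdeg η = k), (mchoose ν η : ℝ)
        = (n.choose k : ℝ) := by
      rw [← Nat.cast_sum]
      norm_cast
      rw [← count_eq ν k, Finset.sum_filter]
    rw [hcount, mul_assoc]
  have hle := range_sum_le n hν
  rw [← hfib, hicc] at hle
  linarith
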